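/- For every finitely generated kC_p-module M, ppdim(M) ≤ size(M); i.e., M admits a permutation resolution of length size(M). -/

import Mathlib

open Polynomial

noncomputable section

/-- `Mmod k i` is the `k[T]`-module `M_i = k[T]/(T^i)`. -/
abbrev Mmod (k : Type) [Field k] (i : ℕ) : Type :=
  Polynomial k ⧸ Ideal.span {(X : Polynomial k) ^ i}

/-- A permutation `kC_p`-module: a direct sum of copies of `kC_p = k[T]/T^p`
and the trivial module `k = k[T]/T`. -/
def IsPermMod (k : Type) [Field k] (p : ℕ) (M : Type) [AddCommGroup M]
    [Module (Polynomial k) M] : Prop :=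
  ∃ r s : ℕ,
    Nonempty (M ≃ₗ[Polynomial k] ((Fin r → Mmod k p) × (Fin s → Mmod k 1)))

/-- `m` has depth `i`: `m ∈ T^i M` but `m ∉ T^{i+1} M`. -/
def HasDepth (k : Type) [Field k] {M : Type} [AddCommGroup M] [Module (Polynomial k) M]
    (i : ℕ) (m : M) : Prop :=
  (∃ y : M, m = (X : Polynomial k) ^ i • y) ∧ ¬ ∃ y : M, m = (X : Polynomial k) ^ (i + 1) • y

/-- `α` is the nilpotency index of `m` with respect to `T`. -/
def IsIndex (k : Type) [Field k] {M : Type} [AddCommGroup M] [Module (Polynomial k) M]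
    (α : ℕ) (m : M) : Prop :=
  (X : Polynomial k) ^ α • m = 0 ∧ ∀ β < α, (X : Polynomial k) ^ β • m ≠ 0

/-- `M` admits a resolution `0 → P_s → ⋯ → P_0 → M → 0` by permutation `kC_p`-modules. -/
def HasPermRes (k : Type) [Field k] (p : ℕ) :
    (s : ℕ) → (M : Type) → [AddCommGroup M] → [Module (Polynomial k) M] → Prop
  | 0, M, _, _ => IsPermMod k p M
  | (s + 1), M, _, _ =>
      ∃ (P : Type) (_ : AddCommGroup P) (_ : Module (Polynomial k) P)
        (f : P →ₗ[Polynomial k] M), IsPermMod k p P ∧ Function.Surjective f ∧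
          HasPermRes k p s (LinearMap.ker f)

/-- The `p`-permutation dimension of `M`: minimal length of a permutation resolution. -/
def ppdim (k : Type) [Field k] (p : ℕ) (M : Type) [AddCommGroup M]
    [Module (Polynomial k) M] : ℕ :=
  sInf {s | HasPermRes k p s M}

/-- The `p`-distance function: `f 1 = f p = 0` and
`f x = min (f (p-x)) (f (p-x+1)) + 1` for `2 ≤ x ≤ p-1`. -/
def IsSizeFun (p : ℕ) (f : ℕ → ℕ) : Prop :=
  f 1 = 0 ∧ f p = 0 ∧ ∀ x, 2 ≤ x → x ≤ p - 1 → f x = min (f (p - x)) (f (p - x + 1)) + 1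

namespace Stmt13Aux

/-- linear equiv between any two subsingleton modules -/
def subsingEquiv {R M N : Type*} [Semiring R] [AddCommMonoid M] [Module R M]
    [AddCommMonoid N] [Module R N] [Subsingleton M] [Subsingleton N] : M ≃ₗ[R] N where
  toFun _ := 0
  invFun _ := 0
  map_add' _ _ := Subsingleton.elim _ _
  map_smul' _ _ := Subsingleton.elim _ _
  left_inv _ := Subsingleton.elim _ _
  right_inv _ := Subsingleton.elim _ _

def prodZeroEquiv {R M N : Type*} [Semiring R] [AddCommMonoid M] [Module R M]
    [AddCommMonoid N] [Module R N] [Subsingleton N] : M ≃ₗ[R] M × N where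
  toFun m := (m, 0)
  invFun x := x.1
  map_add' _ _ := by ext <;> simp
  map_smul' _ _ := by ext <;> simp
  left_inv _ := rfl
  right_inv x := Prod.ext rfl (Subsingleton.elim _ _)

def zeroProdEquiv {R M N : Type*} [Semiring R] [AddCommMonoid M] [Module R M]
    [AddCommMonoid N] [Module R N] [Subsingleton N] : M ≃ₗ[R] N × M where
  toFun m := (0, m)
  invFun x := x.2
  map_add' _ _ := by ext <;> simp
  map_smul' _ _ := by ext <;> simp
  left_inv _ := rfl
  right_inv x := Prod.ext (Subsingleton.elim _ _) rfl

/-- `(Fin (r+r') → M) ≃ₗ (Fin r → M) × (Fin r' → M)` -/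
def finArrowSplit (R M : Type*) [Semiring R] [AddCommMonoid M] [Module R M] (r r' : ℕ) :
    (Fin (r + r') → M) ≃ₗ[R] (Fin r → M) × (Fin r' → M) :=
  (LinearEquiv.funCongrLeft R M finSumFinEquiv).trans
    (LinearEquiv.sumArrowLequivProdArrow _ _ R M)

def prodSubEquiv {R M N : Type*} [Ring R] [AddCommGroup M] [Module R M] [AddCommGroup N]
    [Module R N] (P : Submodule R M) (Q : Submodule R N) : (P × Q) ≃ₗ[R] P.prod Q where
  toFun x := ⟨(x.1.1, x.2.1), ⟨x.1.2, x.2.2⟩⟩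
  invFun y := (⟨y.1.1, (Submodule.mem_prod.mp y.2).1⟩, ⟨y.1.2, (Submodule.mem_prod.mp y.2).2⟩)
  map_add' _ _ := rfl
  map_smul' _ _ := rfl
  left_inv _ := rfl
  right_inv _ := rfl

def piSuccEquiv {R : Type*} [Semiring R] {n : ℕ} (F : Fin (n + 1) → Type*)
    [∀ i, AddCommMonoid (F i)] [∀ i, Module R (F i)] :
    (∀ i, F i) ≃ₗ[R] F 0 × ∀ i : Fin n, F i.succ where
  toFun x := (x 0, fun i => x i.succ)
  invFun y := Fin.cons y.1 y.2
  map_add' _ _ := rfl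
  map_smul' _ _ := rfl
  left_inv x := by
    funext i
    refine Fin.cases ?_ ?_ i <;> simp
  right_inv y := by
    ext <;> simp

variable {k : Type} [Field k] {p : ℕ}

lemma hasPermRes_zero_iff {M : Type} [AddCommGroup M] [Module (Polynomial k) M] :
    HasPermRes k p 0 M ↔ IsPermMod k p M := Iff.rfl

lemma isPermMod_of_equiv {M N : Type} [AddCommGroup M] [Module (Polynomial k) M]
    [AddCommGroup N] [Module (Polynomial k) N] (e : M ≃ₗ[Polynomial k] N)
    (h : IsPermMod k p M) : IsPermMod k p N := by
  obtain ⟨r, s, ⟨g⟩⟩ := h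
  exact ⟨r, s, ⟨e.symm.trans g⟩⟩

lemma isPermMod_subsingleton {M : Type} [AddCommGroup M] [Module (Polynomial k) M]
    [Subsingleton M] : IsPermMod k p M :=
  ⟨0, 0, ⟨subsingEquiv⟩⟩

lemma isPermMod_prod {M N : Type} [AddCommGroup M] [Module (Polynomial k) M]
    [AddCommGroup N] [Module (Polynomial k) N] (hM : IsPermMod k p M)
    (hN : IsPermMod k p N) : IsPermMod k p (M × N) := by
  obtain ⟨r, s, ⟨g⟩⟩ := hM
  obtain ⟨r', s', ⟨g'⟩⟩ := hN
  have E1 : (M × N) ≃ₗ[Polynomial k]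
      ((Fin r → Mmod k p) × (Fin s → Mmod k 1)) ×
        ((Fin r' → Mmod k p) × (Fin s' → Mmod k 1)) := LinearEquiv.prodCongr g g'
  have E2 : (((Fin r → Mmod k p) × (Fin s → Mmod k 1)) ×
        ((Fin r' → Mmod k p) × (Fin s' → Mmod k 1))) ≃ₗ[Polynomial k]
      ((Fin r → Mmod k p) × (Fin r' → Mmod k p)) ×
        ((Fin s → Mmod k 1) × (Fin s' → Mmod k 1)) :=
    LinearEquiv.prodProdProdComm (Polynomial k) _ _ _ _
  have E3 : (((Fin r → Mmod k p) × (Fin r' → Mmod k p)) ×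
        ((Fin s → Mmod k 1) × (Fin s' → Mmod k 1))) ≃ₗ[Polynomial k]
      (Fin (r + r') → Mmod k p) × (Fin (s + s') → Mmod k 1) :=
    LinearEquiv.prodCongr (finArrowSplit (Polynomial k) _ r r').symm
      (finArrowSplit (Polynomial k) _ s s').symm
  exact ⟨r + r', s + s', ⟨(E1.trans E2).trans E3⟩⟩

lemma hasPermRes_of_equiv : ∀ (s : ℕ) (M N : Type) [AddCommGroup M] [Module (Polynomial k) M]
    [AddCommGroup N] [Module (Polynomial k) N],
    (M ≃ₗ[Polynomial k] N) → HasPermRes k p s M → HasPermRes k p s N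
  | 0, M, N, _, _, _, _, e, h => isPermMod_of_equiv e h
  | (s + 1), M, N, _, _, _, _, e, h => by
    obtain ⟨P, iP, mP, g, hP, hsurj, hker⟩ := h
    refine ⟨P, iP, mP, e.toLinearMap.comp g, hP, e.surjective.comp hsurj, ?_⟩
    have hk : LinearMap.ker (e.toLinearMap.comp g) = LinearMap.ker g := by
      rw [LinearMap.ker_comp, LinearEquiv.ker, Submodule.comap_bot]
    exact hasPermRes_of_equiv s _ _ (LinearEquiv.ofEq _ _ hk.symm) hker

lemma hasPermRes_succ : ∀ (s : ℕ) (M : Type) [AddCommGroup M] [Module (Polynomial k) M],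
    HasPermRes k p s M → HasPermRes k p (s + 1) M
  | 0, M, _, _, h => by
    refine ⟨M, ‹_›, ‹_›, LinearMap.id, hasPermRes_zero_iff.mp h, Function.surjective_id, ?_⟩
    haveI : Subsingleton (LinearMap.ker (LinearMap.id : M →ₗ[Polynomial k] M)) := by
      constructor
      rintro ⟨a, ha⟩ ⟨b, hb⟩
      simp only [LinearMap.mem_ker, LinearMap.id_apply] at ha hb
      simp [ha, hb]
    exact isPermMod_subsingleton
  | (s + 1), M, _, _, h => by
    obtain ⟨P, iP, mP, g, hP, hsurj, hker⟩ := h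
    exact ⟨P, iP, mP, g, hP, hsurj, hasPermRes_succ s _ hker⟩

lemma hasPermRes_le {s t : ℕ} (hst : s ≤ t) {M : Type} [AddCommGroup M]
    [Module (Polynomial k) M] (h : HasPermRes k p s M) : HasPermRes k p t M := by
  induction t with
  | zero => exact (Nat.le_zero.mp hst) ▸ h
  | succ t ih =>
    rcases Nat.lt_or_ge s (t + 1) with h' | h'
    · exact hasPermRes_succ t M (ih (Nat.lt_succ_iff.mp h'))
    · exact (Nat.le_antisymm hst h') ▸ h

lemma hasPermRes_prod : ∀ (s : ℕ) (M N : Type) [AddCommGroup M] [Module (Polynomial k) M]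
    [AddCommGroup N] [Module (Polynomial k) N],
    HasPermRes k p s M → HasPermRes k p s N → HasPermRes k p s (M × N)
  | 0, _, _, _, _, _, _, hM, hN => isPermMod_prod hM hN
  | (s + 1), M, N, _, _, _, _, hM, hN => by
    obtain ⟨P, iP, mP, g, hP, hgs, hgk⟩ := hM
    obtain ⟨Q, iQ, mQ, h, hQ, hhs, hhk⟩ := hN
    refine ⟨P × Q, inferInstance, inferInstance, g.prodMap h, isPermMod_prod hP hQ, ?_, ?_⟩
    · rw [LinearMap.coe_prodMap]
      exact hgs.prodMap hhs
    · refine hasPermRes_of_equiv s _ _ ?_ (hasPermRes_prod s _ _ hgk hhk)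
      exact (prodSubEquiv _ _).trans (LinearEquiv.ofEq _ _ (LinearMap.ker_prodMap g h).symm)

/-! ### Concrete maps between the modules `Mmod k i` -/

abbrev qmk (i : ℕ) (r : Polynomial k) : Mmod k i := Submodule.Quotient.mk r

lemma qmk_surjective (i : ℕ) : Function.Surjective (qmk (k := k) i) :=
  Submodule.Quotient.mk_surjective _

lemma smul_qmk (i : ℕ) (r s : Polynomial k) : r • qmk i s = qmk i (r * s) := by
  rw [← Submodule.Quotient.mk_smul]; rfl

lemma qmk_eq_zero {i : ℕ} {r : Polynomial k} : qmk (k := k) i r = 0 ↔ X ^ i ∣ r := by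
  rw [Submodule.Quotient.mk_eq_zero, Ideal.mem_span_singleton]

lemma X_pow_dvd_cancel {a b : ℕ} (h : b ≤ a) (r : Polynomial k) :
    X ^ a ∣ r * X ^ b ↔ X ^ (a - b) ∣ r := by
  conv_lhs => rw [← Nat.sub_add_cancel h, pow_add]
  exact mul_dvd_mul_iff_right (pow_ne_zero b X_ne_zero)

/-- the canonical projection `Mmod k a → Mmod k b` for `b ≤ a` -/
def proj (a b : ℕ) (h : b ≤ a) : Mmod k a →ₗ[Polynomial k] Mmod k b :=
  Submodule.mapQ _ _ LinearMap.id (by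
    rw [Submodule.comap_id]
    exact Ideal.span_singleton_le_span_singleton.mpr (pow_dvd_pow X h))

lemma proj_qmk (a b : ℕ) (h : b ≤ a) (r : Polynomial k) :
    proj a b h (qmk a r) = qmk b r := by
  rw [proj, Submodule.mapQ_apply, LinearMap.id_apply]

lemma proj_surjective (a b : ℕ) (h : b ≤ a) :
    Function.Surjective (proj (k := k) a b h) := by
  intro y
  obtain ⟨r, rfl⟩ := qmk_surjective b y
  exact ⟨qmk a r, proj_qmk a b h r⟩

/-- `r ↦ r • [X^b]` as a map `k[X] → Mmod k a` -/
def genMap (a b : ℕ) : Polynomial k →ₗ[Polynomial k] Mmod k a :=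
  LinearMap.toSpanSingleton (Polynomial k) (Mmod k a) (qmk a (X ^ b))

lemma genMap_apply (a b : ℕ) (r : Polynomial k) : genMap a b r = qmk a (r * X ^ b) := by
  rw [genMap, LinearMap.toSpanSingleton_apply, smul_qmk]

lemma ker_genMap (a b : ℕ) (h : b ≤ a) :
    LinearMap.ker (genMap (k := k) a b) = Ideal.span {X ^ (a - b)} := by
  ext r
  rw [LinearMap.mem_ker, genMap_apply, qmk_eq_zero, Ideal.mem_span_singleton,
    X_pow_dvd_cancel h]

lemma range_genMap (a b : ℕ) (h : b ≤ a) :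
    LinearMap.range (genMap (k := k) a b) = LinearMap.ker (proj a b h) := by
  ext x
  constructor
  · rintro ⟨r, rfl⟩
    rw [LinearMap.mem_ker, genMap_apply, proj_qmk, qmk_eq_zero]
    exact dvd_mul_left _ _
  · intro hx
    obtain ⟨u, rfl⟩ := qmk_surjective a x
    rw [LinearMap.mem_ker, proj_qmk, qmk_eq_zero] at hx
    obtain ⟨t, rfl⟩ := hx
    exact ⟨t, by rw [genMap_apply, mul_comm]⟩

set_option maxHeartbeats 1000000 in
/-- `Mmod k (a-b)` is the kernel of the projection `Mmod k a → Mmod k b`. -/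
def kerProjEquiv (a b : ℕ) (h : b ≤ a) :
    Mmod k (a - b) ≃ₗ[Polynomial k] LinearMap.ker (proj (k := k) a b h) := by
  have hker := ker_genMap (k := k) a b h
  set φ := Submodule.liftQ (Ideal.span {X ^ (a - b)}) (genMap (k := k) a b)
    (le_of_eq hker.symm) with hφ
  have hinj : Function.Injective φ :=
    LinearMap.ker_eq_bot.mp (Submodule.ker_liftQ_eq_bot _ _ _ (le_of_eq hker))
  have hrange : LinearMap.range φ = LinearMap.ker (proj (k := k) a b h) := by
    rw [hφ, Submodule.range_liftQ, range_genMap a b h]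
  exact (LinearEquiv.ofInjective φ hinj).trans (LinearEquiv.ofEq _ _ hrange)

/-- the socle inclusion `Mmod k 1 → Mmod k c`, `[r] ↦ [r X^{c-1}]` -/
def socle (c : ℕ) (hc : 1 ≤ c) : Mmod k 1 →ₗ[Polynomial k] Mmod k c :=
  Submodule.liftQ _ (LinearMap.toSpanSingleton (Polynomial k) (Mmod k c) (qmk c (X ^ (c - 1))))
    (by
      intro r hr
      rw [Ideal.mem_span_singleton, pow_one] at hr
      rw [LinearMap.mem_ker, LinearMap.toSpanSingleton_apply, smul_qmk, qmk_eq_zero,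
        X_pow_dvd_cancel (Nat.sub_le c 1), show c - (c - 1) = 1 by omega, pow_one]
      exact hr)

lemma socle_qmk (c : ℕ) (hc : 1 ≤ c) (r : Polynomial k) :
    socle c hc (qmk 1 r) = qmk c (r * X ^ (c - 1)) := by
  rw [socle, Submodule.liftQ_apply, LinearMap.toSpanSingleton_apply, smul_qmk]

/-- the map `Mmod k p × Mmod k 1 → Mmod k c` -/
def dmap (p c : ℕ) (h1 : 1 ≤ c) (h2 : c ≤ p) :
    (Mmod k p × Mmod k 1) →ₗ[Polynomial k] Mmod k c :=
  (proj p c h2).coprod (socle c h1)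

lemma dmap_apply (p c : ℕ) (h1 : 1 ≤ c) (h2 : c ≤ p) (s t : Polynomial k) :
    dmap p c h1 h2 (qmk p s, qmk 1 t) = qmk c (s + t * X ^ (c - 1)) := by
  rw [dmap, LinearMap.coprod_apply, proj_qmk, socle_qmk]
  rfl

lemma dmap_surjective (p c : ℕ) (h1 : 1 ≤ c) (h2 : c ≤ p) :
    Function.Surjective (dmap (k := k) p c h1 h2) := by
  intro y
  obtain ⟨r, rfl⟩ := qmk_surjective c y
  refine ⟨(qmk p r, qmk 1 0), ?_⟩
  rw [dmap_apply, zero_mul, add_zero]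

/-- `r ↦ r • ([X^{c-1}], -[1])` -/
def nu (p c : ℕ) : Polynomial k →ₗ[Polynomial k] Mmod k p × Mmod k 1 :=
  LinearMap.toSpanSingleton (Polynomial k) _ (qmk p (X ^ (c - 1)), -(qmk 1 1))

lemma nu_apply (p c : ℕ) (r : Polynomial k) :
    nu p c r = (qmk p (r * X ^ (c - 1)), -(qmk 1 r)) := by
  rw [nu, LinearMap.toSpanSingleton_apply, Prod.smul_mk, smul_qmk, smul_neg, smul_qmk, mul_one]

lemma ker_nu (p c : ℕ) (h1 : 1 ≤ c) (h2 : c ≤ p) :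
    LinearMap.ker (nu (k := k) p c) = Ideal.span {X ^ (p - c + 1)} := by
  ext r
  rw [LinearMap.mem_ker, nu_apply, Prod.mk_eq_zero, neg_eq_zero, qmk_eq_zero, qmk_eq_zero,
    pow_one, X_pow_dvd_cancel (Nat.sub_le c 1 |>.trans (Nat.le_of_lt_succ (Nat.lt_succ_of_le h2))),
    Ideal.mem_span_singleton, show p - (c - 1) = p - c + 1 by omega]
  constructor
  · exact fun hx => hx.1
  · intro hx
    exact ⟨hx, (dvd_pow_self X (by omega : p - c + 1 ≠ 0)).trans hx⟩

lemma range_nu (p c : ℕ) (h1 : 1 ≤ c) (h2 : c ≤ p) :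
    LinearMap.range (nu (k := k) p c) = LinearMap.ker (dmap p c h1 h2) := by
  have hXc : (X : Polynomial k) ^ c = X * X ^ (c - 1) := by
    conv_lhs => rw [show c = (c - 1) + 1 by omega]
    rw [pow_succ, mul_comm]
  ext x
  constructor
  · rintro ⟨r, rfl⟩
    rw [LinearMap.mem_ker, nu_apply, ← Submodule.Quotient.mk_neg, dmap_apply, qmk_eq_zero]
    exact ⟨0, by ring⟩
  · intro hx
    obtain ⟨u, v⟩ := x
    obtain ⟨s, rfl⟩ := qmk_surjective p u
    obtain ⟨t, rfl⟩ := qmk_surjective 1 v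
    rw [LinearMap.mem_ker, dmap_apply, qmk_eq_zero] at hx
    obtain ⟨q, hq⟩ := hx
    refine ⟨X * q - t, ?_⟩
    rw [nu_apply]
    refine Prod.ext ?_ ?_
    · show qmk p ((X * q - t) * X ^ (c - 1)) = qmk p s
      congr 1
      rw [hXc] at hq
      linear_combination -hq
    · show -(qmk 1 (X * q - t)) = qmk 1 t
      rw [← Submodule.Quotient.mk_neg]
      rw [Submodule.Quotient.eq, Ideal.mem_span_singleton, pow_one]
      have heq : -(X * q - t) - t = X * (-q) := by ring
      rw [heq]
      exact dvd_mul_right X (-q)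

set_option maxHeartbeats 1000000 in
/-- `Mmod k (p-c+1)` is the kernel of `dmap : Mmod k p × Mmod k 1 → Mmod k c`. -/
def kerDmapEquiv (p c : ℕ) (h1 : 1 ≤ c) (h2 : c ≤ p) :
    Mmod k (p - c + 1) ≃ₗ[Polynomial k] LinearMap.ker (dmap (k := k) p c h1 h2) := by
  have hker := ker_nu (k := k) p c h1 h2
  set φ := Submodule.liftQ (Ideal.span {X ^ (p - c + 1)}) (nu (k := k) p c)
    (le_of_eq hker.symm) with hφ
  have hinj : Function.Injective φ :=
    LinearMap.ker_eq_bot.mp (Submodule.ker_liftQ_eq_bot _ _ _ (le_of_eq hker))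
  have hrange : LinearMap.range φ = LinearMap.ker (dmap (k := k) p c h1 h2) := by
    rw [hφ, Submodule.range_liftQ, range_nu p c h1 h2]
  exact (LinearEquiv.ofInjective φ hinj).trans (LinearEquiv.ofEq _ _ hrange)

lemma isPermMod_Mmod_p : IsPermMod k p (Mmod k p) :=
  ⟨1, 0, ⟨(LinearEquiv.funUnique (Fin 1) (Polynomial k) (Mmod k p)).symm.trans prodZeroEquiv⟩⟩

lemma isPermMod_Mmod_one : IsPermMod k p (Mmod k 1) :=
  ⟨0, 1, ⟨(LinearEquiv.funUnique (Fin 1) (Polynomial k) (Mmod k 1)).symm.trans zeroProdEquiv⟩⟩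

lemma isPermMod_P2 : IsPermMod k p (Mmod k p × Mmod k 1) :=
  ⟨1, 1, ⟨LinearEquiv.prodCongr (LinearEquiv.funUnique (Fin 1) (Polynomial k) (Mmod k p)).symm
      (LinearEquiv.funUnique (Fin 1) (Polynomial k) (Mmod k 1)).symm⟩⟩

lemma single (hp : p.Prime) (f : ℕ → ℕ) (hf : IsSizeFun p f) :
    ∀ (s c : ℕ), 1 ≤ c → c ≤ p → f c ≤ s → HasPermRes k p s (Mmod k c) := by
  intro s
  induction s with
  | zero =>
    intro c h1 h2 h0
    rw [hasPermRes_zero_iff]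
    rcases eq_or_lt_of_le h1 with h | h
    · exact h ▸ isPermMod_Mmod_one
    rcases eq_or_lt_of_le h2 with h' | h'
    · exact h' ▸ isPermMod_Mmod_p
    · exfalso
      have := hf.2.2 c h (by omega)
      omega
  | succ s ih =>
    intro c h1 h2 hle
    rcases eq_or_lt_of_le h1 with h | h
    · exact hasPermRes_le (Nat.zero_le _) (hasPermRes_zero_iff.mpr (h ▸ isPermMod_Mmod_one))
    rcases eq_or_lt_of_le h2 with h' | h'
    · exact hasPermRes_le (Nat.zero_le _) (hasPermRes_zero_iff.mpr (h' ▸ isPermMod_Mmod_p))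
    have hc2 : 2 ≤ c := h
    have hcp : c ≤ p - 1 := by omega
    have hrec := hf.2.2 c hc2 hcp
    rcases le_total (f (p - c)) (f (p - c + 1)) with hmin | hmin
    · -- use `proj p c`
      have hfs : f (p - c) ≤ s := by omega
      refine ⟨Mmod k p, inferInstance, inferInstance, proj p c h2, isPermMod_Mmod_p,
        proj_surjective p c h2, ?_⟩
      refine hasPermRes_of_equiv s _ _ (kerProjEquiv p c h2) ?_
      exact ih (p - c) (by omega) (by omega) hfs
    · -- use `dmap p c`
      have hfs : f (p - c + 1) ≤ s := by omega
      refine ⟨Mmod k p × Mmod k 1, inferInstance, inferInstance, dmap p c h1 h2, isPermMod_P2,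
        dmap_surjective p c h1 h2, ?_⟩
      refine hasPermRes_of_equiv s _ _ (kerDmapEquiv p c h1 h2) ?_
      exact ih (p - c + 1) (by omega) (by omega) hfs

lemma hasPermRes_pi (s : ℕ) :
    ∀ (n : ℕ) (c : Fin n → ℕ),
      (∀ i, HasPermRes k p s (Mmod k (c i))) → HasPermRes k p s ((i : Fin n) → Mmod k (c i))
  | 0, c, _ => by
    haveI : Subsingleton ((i : Fin 0) → Mmod k (c i)) := inferInstance
    exact hasPermRes_le (Nat.zero_le s) (hasPermRes_zero_iff.mpr isPermMod_subsingleton)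
  | (n + 1), c, h => by
    have ihp := hasPermRes_pi s n (fun i => c i.succ) (fun i => h i.succ)
    have hprod := hasPermRes_prod s _ _ (h 0) ihp
    exact hasPermRes_of_equiv s _ _ (piSuccEquiv (fun i => Mmod k (c i))).symm hprod

end Stmt13Aux

/-- Every finitely generated `kC_p`-module `M` admits a permutation resolution of
length `size M`; hence `ppdim M ≤ size M`. Here `size M` is the maximum of the
`p`-distances of the invariants of `M`. -/
theorem stmt13 (k : Type) [Field k] (p : ℕ) (hp : p.Prime) [CharP k p]
    (M : Type) [AddCommGroup M] [Module (Polynomial k) M] [Module.Finite (Polynomial k) M]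
    (hann : ∀ m : M, (X : Polynomial k) ^ p • m = 0)
    (n : ℕ) (c : Fin n → ℕ) (hc : ∀ i, 1 ≤ c i ∧ c i ≤ p)
    (e : M ≃ₗ[Polynomial k] ((i : Fin n) → Mmod k (c i)))
    (f : ℕ → ℕ) (hf : IsSizeFun p f) :
    HasPermRes k p (Finset.univ.sup (fun i => f (c i))) M ∧
      ppdim k p M ≤ Finset.univ.sup (fun i => f (c i)) := by
  classical
  set s := Finset.univ.sup (fun i => f (c i)) with hs
  have h1 : HasPermRes k p s M := by
    refine Stmt13Aux.hasPermRes_of_equiv s _ _ e.symm ?_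
    refine Stmt13Aux.hasPermRes_pi s n c (fun i => ?_)
    refine Stmt13Aux.single hp f hf s (c i) (hc i).1 (hc i).2 ?_
    rw [hs]
    exact Finset.le_sup (f := fun i => f (c i)) (Finset.mem_univ i)
  exact ⟨h1, Nat.sInf_le h1⟩
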